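/- There exists a constant $K$ depending only on $d$ with the following property. For every even integer $C_0 \ge 2$, all integers $r \ge p \ge 2$, every integer $\nu \ge 1$, and every finite non-empty $\mathbb{Z}^{d+1}$-connected set $S \subset \mathbb{Z}^{d+1}$, there exists a $\mathbb{Z}^{d+1}$-connected set $\Lambda \subset \mathbb{Z}^{d+1}$ such that $|\Lambda| \le K\,\big(\tfrac{|S|\,\Delta_p}{\nu\,\Delta_r} + 1\big)\,p^{q}$ and $S_p^{*} \subseteq \bigcup_{(\mathbf{m},u) \in \Lambda} \mathcal{L}_{r,\nu}(\mathbf{m},u)$. -/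

import Mathlib

/-- Nearest-neighbor adjacency on `ℤ^d × ℤ` (i.e. `ℤ^{d+1}`): `ℓ^1` distance 1. -/
def NNAdjP {d : ℕ} (x y : (Fin d → ℤ) × ℤ) : Prop :=
  (∑ s, |x.1 s - y.1 s|) + |x.2 - y.2| = 1

/-- A set `A` is connected for the adjacency relation `adj`. -/
def ConnectedIn {α : Type*} (adj : α → α → Prop) (A : Set α) : Prop :=
  ∀ x ∈ A, ∀ y ∈ A, Relation.ReflTransGen (fun a b => a ∈ A ∧ b ∈ A ∧ adj a b) x y

/-- The block `B̂_p(i,k)` of spatial side `Δ_p = C₀^{6p}` and temporal side `p^q Δ_p`,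
where `q = 2d+1`. -/
def hatB (d C0 p : ℕ) (i : Fin d → ℤ) (k : ℤ) : Set ((Fin d → ℤ) × ℤ) :=
  {z | (∀ s, i s * (C0 : ℤ) ^ (6 * p) ≤ z.1 s ∧ z.1 s < (i s + 1) * (C0 : ℤ) ^ (6 * p)) ∧
    k * (p : ℤ) ^ (2 * d + 1) * (C0 : ℤ) ^ (6 * p) ≤ z.2 ∧
    z.2 < (k + 1) * (p : ℤ) ^ (2 * d + 1) * (C0 : ℤ) ^ (6 * p)}

/-- `S*_p`: the union of the blocks `B̂_p(i',k)` over pairs `(i',k)` with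
`‖i' - j‖_∞ ≤ 4d - 1` for some `(j, k+1) ∈ S`. -/
def SStar (d C0 p : ℕ) (S : Set ((Fin d → ℤ) × ℤ)) : Set ((Fin d → ℤ) × ℤ) :=
  {z | ∃ (i' : Fin d → ℤ) (k : ℤ) (j : Fin d → ℤ),
    (j, k + 1) ∈ S ∧ (∀ s, |i' s - j s| ≤ 4 * (d : ℤ) - 1) ∧ z ∈ hatB d C0 p i' k}

/-- The cube `ℒ_{r,ν}(m,u)` of side `ν Δ_r` in all `d+1` coordinates. -/
def LBlock (d C0 r ν : ℕ) (m : Fin d → ℤ) (u : ℤ) : Set ((Fin d → ℤ) × ℤ) :=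
  {z | (∀ s, (ν : ℤ) * m s * (C0 : ℤ) ^ (6 * r) ≤ z.1 s ∧
      z.1 s < (ν : ℤ) * (m s + 1) * (C0 : ℤ) ^ (6 * r)) ∧
    (ν : ℤ) * u * (C0 : ℤ) ^ (6 * r) ≤ z.2 ∧
    z.2 < (ν : ℤ) * (u + 1) * (C0 : ℤ) ^ (6 * r)}

namespace CoverAux

abbrev Pt (d : ℕ) := (Fin d → ℤ) × ℤ

variable {d : ℕ}

-- integer division helpers
lemma ediv_le_of_le {L x m : ℤ} (hL : 0 < L) (h : x ≤ m * L) : x / L ≤ m := by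
  have := Int.ediv_le_ediv hL h
  rwa [Int.mul_ediv_cancel _ hL.ne'] at this

lemma le_ediv_of_le {L x m : ℤ} (hL : 0 < L) (h : m * L ≤ x) : m ≤ x / L :=
  (Int.le_ediv_iff_mul_le hL).mpr h

lemma ediv_lower {L : ℤ} (hL : 0 < L) (x : ℤ) : (x / L) * L ≤ x := by
  have h := Int.mul_ediv_add_emod x L
  have h2 := Int.emod_nonneg x hL.ne'
  nlinarith [h, h2]

lemma ediv_upper {L : ℤ} (hL : 0 < L) (x : ℤ) : x < (x / L + 1) * L := by
  have h := Int.mul_ediv_add_emod x L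
  have h3 := Int.emod_lt_of_pos x hL
  nlinarith [h, h3]

lemma ediv_sep {L a b : ℤ} (hL : 0 < L) (h3 : 3 ≤ |a / L - b / L|) : 2 * L + 1 ≤ |a - b| := by
  by_contra hc
  push_neg at hc
  rw [abs_lt] at hc
  rcases abs_cases (a / L - b / L) with ⟨he, -⟩ | ⟨he, -⟩ <;> rw [he] at h3
  all_goals {
  have h1 : a ≤ b + 2 * L := by omega
  have h2 : b + (-2) * L ≤ a := by omega
  have e1 : (b + 2 * L) / L = b / L + 2 := Int.add_mul_ediv_right b 2 hL.ne'
  have e2 : (b + (-2) * L) / L = b / L + (-2) := Int.add_mul_ediv_right b (-2) hL.ne'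
  have u1 : a / L ≤ b / L + 2 := by rw [← e1]; exact Int.ediv_le_ediv hL h1
  have u2 : b / L - 2 ≤ a / L := by
    have := Int.ediv_le_ediv hL h2
    omega
  omega }

lemma ediv_nbhd {L a b : ℤ} (hL : 0 < L) (h : |a - b| ≤ L) : |a / L - b / L| ≤ 1 := by
  rw [abs_le] at h ⊢
  have h1 : a ≤ b + 1 * L := by omega
  have h2 : b + (-1) * L ≤ a := by omega
  have e1 : (b + 1 * L) / L = b / L + 1 := Int.add_mul_ediv_right b 1 hL.ne'
  have e2 : (b + (-1) * L) / L = b / L + (-1) := Int.add_mul_ediv_right b (-1) hL.ne'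
  have u1 : a / L ≤ b / L + 1 := by rw [← e1]; exact Int.ediv_le_ediv hL h1
  have u2 : b / L - 1 ≤ a / L := by
    have := Int.ediv_le_ediv hL h2
    omega
  omega


/-- ℓ¹ distance. -/
def dist1 (x y : Pt d) : ℕ := (∑ s, (x.1 s - y.1 s).natAbs) + (x.2 - y.2).natAbs

/-- ℓ∞ distance. -/
def distI (x y : Pt d) : ℕ := max (Finset.univ.sup fun s => (x.1 s - y.1 s).natAbs) (x.2 - y.2).natAbs

-- extra distI lemmas placed later
lemma nnadj_iff (x y : Pt d) : NNAdjP x y ↔ dist1 x y = 1 := by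
  unfold NNAdjP dist1
  constructor
  · intro h
    have : ((∑ s, (x.1 s - y.1 s).natAbs) + (x.2 - y.2).natAbs : ℤ) = 1 := by
      push_cast [← Int.abs_eq_natAbs]
      exact h
    exact_mod_cast this
  · intro h
    have : ((∑ s, (x.1 s - y.1 s).natAbs) + (x.2 - y.2).natAbs : ℤ) = 1 := by exact_mod_cast h
    calc (∑ s, |x.1 s - y.1 s|) + |x.2 - y.2|
        = ((∑ s, (x.1 s - y.1 s).natAbs) + (x.2 - y.2).natAbs : ℤ) := by
          push_cast [← Int.abs_eq_natAbs]; ring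
      _ = 1 := this

lemma dist1_eq_zero {x y : Pt d} (h : dist1 x y = 0) : x = y := by
  unfold dist1 at h
  have h1 : ∀ s ∈ Finset.univ, (x.1 s - y.1 s).natAbs = 0 := by
    rw [← Finset.sum_eq_zero_iff]; omega
  have h2 : (x.2 - y.2).natAbs = 0 := by omega
  have : x.1 = y.1 := funext fun s => by have := h1 s (Finset.mem_univ s); omega
  exact Prod.ext this (by omega)

lemma adj_coord {x y : Pt d} (h : NNAdjP x y) :
    (∀ s, (x.1 s - y.1 s).natAbs ≤ 1) ∧ (x.2 - y.2).natAbs ≤ 1 := by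
  rw [nnadj_iff] at h
  unfold dist1 at h
  constructor
  · intro s
    have hs : (x.1 s - y.1 s).natAbs ≤ ∑ s, (x.1 s - y.1 s).natAbs :=
      Finset.single_le_sum (f := fun s => (x.1 s - y.1 s).natAbs)
        (fun i _ => Nat.zero_le _) (Finset.mem_univ s)
    omega
  · omega

lemma distI_le_one {x y : Pt d} (h : NNAdjP x y) : distI x y ≤ 1 := by
  obtain ⟨h1, h2⟩ := adj_coord h
  unfold distI
  exact max_le (Finset.sup_le fun s _ => h1 s) h2

lemma distI_triangle (x y z : Pt d) : distI x z ≤ distI x y + distI y z := by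
  unfold distI
  apply max_le
  · apply Finset.sup_le
    intro s _
    have t1 : (x.1 s - z.1 s).natAbs ≤ (x.1 s - y.1 s).natAbs + (y.1 s - z.1 s).natAbs := by omega
    have t2 : (x.1 s - y.1 s).natAbs ≤ Finset.univ.sup fun s => (x.1 s - y.1 s).natAbs :=
      Finset.le_sup (f := fun s => (x.1 s - y.1 s).natAbs) (Finset.mem_univ s)
    have t3 : (y.1 s - z.1 s).natAbs ≤ Finset.univ.sup fun s => (y.1 s - z.1 s).natAbs :=
      Finset.le_sup (f := fun s => (y.1 s - z.1 s).natAbs) (Finset.mem_univ s)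
    calc (x.1 s - z.1 s).natAbs ≤ _ + _ := t1
      _ ≤ _ := by
        apply Nat.add_le_add (t2.trans (le_max_left _ _)) (t3.trans (le_max_left _ _))
  · have : (x.2 - z.2).natAbs ≤ (x.2 - y.2).natAbs + (y.2 - z.2).natAbs := by omega
    exact this.trans (Nat.add_le_add (le_max_right _ _) (le_max_right _ _))

/-- Discrete IVT along a path. -/
lemma ivt {α : Type*} {R : α → α → Prop} {S : Set α} (f : α → ℕ)
    (hf : ∀ a b, R a b → f b ≤ f a + 1)
    {x y : α} (h : Relation.ReflTransGen (fun a b => a ∈ S ∧ b ∈ S ∧ R a b) x y)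
    (hx : x ∈ S) :
    ∀ t, f x ≤ t → t ≤ f y → ∃ z ∈ S, f z = t := by
  induction h with
  | refl => intro t h1 h2; exact ⟨x, hx, le_antisymm h1 h2⟩
  | tail hab hbc ih =>
    intro t h1 h2
    rcases le_or_gt t (f _) with h3 | h3
    · exact ih t h1 h3
    · refine ⟨_, hbc.2.1, ?_⟩
      have := hf _ _ hbc.2.2
      omega

lemma distI_self (x : Pt d) : distI x x = 0 := by
  simp [distI]

lemma growth {S : Set (Pt d)} (hS : ConnectedIn NNAdjP S) {x y : Pt d}
    (hx : x ∈ S) (hy : y ∈ S) :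
    ∀ t, t ≤ distI x y → ∃ z ∈ S, distI x z = t := by
  intro t ht
  have h := hS x hx y hy
  apply ivt (f := distI x) (S := S) _ h hx t (by rw [distI_self]; exact Nat.zero_le _) ht
  intro a b hab
  calc distI x b ≤ distI x a + distI a b := distI_triangle _ _ _
    _ ≤ distI x a + 1 := by have := distI_le_one hab; omega

lemma distI_comm (x y : Pt d) : distI x y = distI y x := by
  unfold distI
  congr 1
  · apply Finset.sup_congr rfl
    intro s _
    omega
  · omega

lemma distI_coord_s (x y : Pt d) (s : Fin d) : (x.1 s - y.1 s).natAbs ≤ distI x y :=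
  le_trans (Finset.le_sup (f := fun s => (x.1 s - y.1 s).natAbs) (Finset.mem_univ s))
    (le_max_left _ _)

lemma distI_coord_t (x y : Pt d) : (x.2 - y.2).natAbs ≤ distI x y := le_max_right _ _

end CoverAux

namespace CoverAux2
open CoverAux

variable {d : ℕ}

lemma adj_cases {x y : Pt d} (h : NNAdjP x y) :
    (x.1 = y.1 ∧ (x.2 - y.2).natAbs = 1) ∨
    (∃ s₀ : Fin d, (x.1 s₀ - y.1 s₀).natAbs = 1 ∧ (∀ s, s ≠ s₀ → x.1 s = y.1 s) ∧ x.2 = y.2) := by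
  rw [nnadj_iff] at h
  unfold dist1 at h
  rcases Nat.eq_zero_or_pos (x.2 - y.2).natAbs with h2 | h2
  · right
    have hsum : ∑ s, (x.1 s - y.1 s).natAbs = 1 := by omega
    have hne : ∑ s, (x.1 s - y.1 s).natAbs ≠ 0 := by omega
    obtain ⟨s₀, -, hs₀⟩ := Finset.exists_ne_zero_of_sum_ne_zero hne
    have hsplit : (x.1 s₀ - y.1 s₀).natAbs + ∑ s ∈ Finset.univ.erase s₀, (x.1 s - y.1 s).natAbs
        = ∑ s, (x.1 s - y.1 s).natAbs :=
      Finset.add_sum_erase _ (fun s => (x.1 s - y.1 s).natAbs) (Finset.mem_univ s₀)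
    have hrest : ∑ s ∈ Finset.univ.erase s₀, (x.1 s - y.1 s).natAbs = 0 := by omega
    refine ⟨s₀, by omega, ?_, by omega⟩
    intro s hs
    have := (Finset.sum_eq_zero_iff.mp hrest) s (Finset.mem_erase.mpr ⟨hs, Finset.mem_univ s⟩)
    omega
  · left
    have hsum : ∑ s, (x.1 s - y.1 s).natAbs = 0 := by omega
    refine ⟨funext fun s => ?_, by omega⟩
    have := (Finset.sum_eq_zero_iff.mp hsum) s (Finset.mem_univ s)
    omega

/-- Axis-parallel boxes are connected. -/
lemma boxConn (lo hi : Fin d → ℤ) (a b : ℤ) :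
    ConnectedIn NNAdjP
      {z : Pt d | (∀ s, lo s ≤ z.1 s ∧ z.1 s ≤ hi s) ∧ a ≤ z.2 ∧ z.2 ≤ b} := by
  set Bx := {z : Pt d | (∀ s, lo s ≤ z.1 s ∧ z.1 s ≤ hi s) ∧ a ≤ z.2 ∧ z.2 ≤ b} with hBx
  intro x hx y hy
  have key : ∀ n : ℕ, ∀ x : Pt d, x ∈ Bx → dist1 x y ≤ n →
      Relation.ReflTransGen (fun a b => a ∈ Bx ∧ b ∈ Bx ∧ NNAdjP a b) x y := by
    intro n
    induction n with
    | zero =>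
      intro x hx hle
      have : x = y := dist1_eq_zero (Nat.le_zero.mp hle)
      exact this ▸ Relation.ReflTransGen.refl
    | succ n ih =>
      intro x hx hle
      by_cases hxy : x = y
      · exact hxy ▸ Relation.ReflTransGen.refl
      · -- pick a coordinate where they differ
        by_cases ht : x.2 = y.2
        · have hne1 : x.1 ≠ y.1 := fun h => hxy (Prod.ext h ht)
          obtain ⟨s₀, hs₀⟩ := Function.ne_iff.mp hne1
          set v : ℤ := x.1 s₀ + (if x.1 s₀ < y.1 s₀ then 1 else -1) with hv
          set x' : Pt d := (Function.update x.1 s₀ v, x.2) with hx'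
          have hmem : x' ∈ Bx := by
            refine ⟨fun s => ?_, hx.2⟩
            by_cases hs : s = s₀
            · subst hs
              simp only [hx', Function.update_self]
              have h1 := hx.1 s
              have h2 : lo s ≤ y.1 s ∧ y.1 s ≤ hi s := hy.1 s
              constructor <;> (rw [hv]; split_ifs <;> omega)
            · simp only [hx', Function.update_of_ne hs]
              exact hx.1 s
          have hadj : NNAdjP x x' := by
            rw [nnadj_iff]
            unfold dist1
            have hz : ∀ s, s ≠ s₀ → (x.1 s - x'.1 s).natAbs = 0 := by
              intro s hs
              simp [hx', Function.update_of_ne hs]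
            have hsum : ∑ s, (x.1 s - x'.1 s).natAbs = (x.1 s₀ - x'.1 s₀).natAbs := by
              rw [← Finset.add_sum_erase _ _ (Finset.mem_univ s₀)]
              rw [Finset.sum_eq_zero (fun s hs => hz s (Finset.mem_erase.mp hs).1)]
              omega
            rw [hsum]
            simp only [hx', Function.update_self]
            have : x'.2 = x.2 := rfl
            rw [hv]
            split_ifs <;> simp <;> omega
          have hdec : dist1 x' y ≤ n := by
            have h1 : (x'.1 s₀ - y.1 s₀).natAbs + 1 = (x.1 s₀ - y.1 s₀).natAbs := by
              simp only [hx', Function.update_self, hv]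
              split_ifs <;> omega
            have h2 : ∀ s, s ≠ s₀ → (x'.1 s - y.1 s).natAbs = (x.1 s - y.1 s).natAbs := by
              intro s hs; simp [hx', Function.update_of_ne hs]
            have e1 : ∑ s, (x'.1 s - y.1 s).natAbs
                = (x'.1 s₀ - y.1 s₀).natAbs + ∑ s ∈ Finset.univ.erase s₀, (x'.1 s - y.1 s).natAbs := 
              (Finset.add_sum_erase _ _ (Finset.mem_univ s₀)).symm
            have e2 : ∑ s, (x.1 s - y.1 s).natAbs
                = (x.1 s₀ - y.1 s₀).natAbs + ∑ s ∈ Finset.univ.erase s₀, (x.1 s - y.1 s).natAbs := 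
              (Finset.add_sum_erase _ _ (Finset.mem_univ s₀)).symm
            have e3 : ∑ s ∈ Finset.univ.erase s₀, (x'.1 s - y.1 s).natAbs
                = ∑ s ∈ Finset.univ.erase s₀, (x.1 s - y.1 s).natAbs :=
              Finset.sum_congr rfl (fun s hs => h2 s (Finset.mem_erase.mp hs).1)
            have hx'2 : x'.2 = x.2 := rfl
            unfold dist1 at hle ⊢
            rw [hx'2]
            omega
          exact Relation.ReflTransGen.head ⟨hx, hmem, hadj⟩ (ih x' hmem hdec)
        · set v : ℤ := x.2 + (if x.2 < y.2 then 1 else -1) with hv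
          set x' : Pt d := (x.1, v) with hx'
          have hmem : x' ∈ Bx := by
            refine ⟨hx.1, ?_⟩
            have h1 := hx.2
            have h2 := hy.2
            constructor <;> (simp only [hx']; rw [hv]; split_ifs <;> omega)
          have hadj : NNAdjP x x' := by
            rw [nnadj_iff]
            unfold dist1
            have : ∑ s, (x.1 s - x'.1 s).natAbs = 0 :=
              Finset.sum_eq_zero (fun s _ => by simp [hx'])
            rw [this]
            simp only [hx', hv]
            split_ifs <;> simp <;> omega
          have hdec : dist1 x' y ≤ n := by
            unfold dist1 at hle ⊢
            have : ∑ s, (x'.1 s - y.1 s).natAbs = ∑ s, (x.1 s - y.1 s).natAbs := rfl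
            rw [this]
            have h1 : (x'.2 - y.2).natAbs + 1 = (x.2 - y.2).natAbs := by
              simp only [hx', hv]; split_ifs <;> omega
            omega
          exact Relation.ReflTransGen.head ⟨hx, hmem, hadj⟩ (ih x' hmem hdec)
  exact key (dist1 x y) x hx le_rfl

/-- Gluing lemma: a union of connected pieces over a connected index set is connected. -/
lemma connectedIn_biUnion {α : Type*} {β : Type*} {A : α → α → Prop} {B : β → β → Prop}
    {S : Set α} (hS : ConnectedIn A S) (G : α → Set β)
    (hconn : ∀ w ∈ S, ConnectedIn B (G w))
    (hne : ∀ w ∈ S, (G w).Nonempty)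
    (hglue : ∀ w ∈ S, ∀ w' ∈ S, A w w' → ∃ x ∈ G w, ∃ y ∈ G w', x = y ∨ B x y) :
    ConnectedIn B (⋃ w ∈ S, G w) := by
  set U := ⋃ w ∈ S, G w with hU
  have hsub : ∀ w ∈ S, G w ⊆ U := fun w hw => Set.subset_biUnion_of_mem hw
  have hinner : ∀ w ∈ S, ∀ x ∈ G w, ∀ y ∈ G w,
      Relation.ReflTransGen (fun a b => a ∈ U ∧ b ∈ U ∧ B a b) x y := by
    intro w hw x hx y hy
    exact Relation.ReflTransGen.mono
      (fun a b hab => ⟨hsub w hw hab.1, hsub w hw hab.2.1, hab.2.2⟩) x y (hconn w hw x hx y hy)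
  have key : ∀ w ∈ S, ∀ w', Relation.ReflTransGen (fun a b => a ∈ S ∧ b ∈ S ∧ A a b) w w' →
      w' ∈ S → ∀ x ∈ G w, ∀ y ∈ G w',
      Relation.ReflTransGen (fun a b => a ∈ U ∧ b ∈ U ∧ B a b) x y := by
    intro w hw w' hpath
    induction hpath with
    | refl => intro _ x hx y hy; exact hinner w hw x hx y hy
    | @tail b c hwb hbc ih =>
      intro hc x hx y hy
      obtain ⟨xb, hxb, yc, hyc, hor⟩ := hglue b hbc.1 c hbc.2.1 hbc.2.2
      have p1 := ih hbc.1 x hx xb hxb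
      have p3 := hinner c hc yc hyc y hy
      have p2 : Relation.ReflTransGen (fun a b => a ∈ U ∧ b ∈ U ∧ B a b) xb yc := by
        rcases hor with h | h
        · exact h ▸ Relation.ReflTransGen.refl
        · exact Relation.ReflTransGen.single
            ⟨hsub b hbc.1 hxb, hsub c hc hyc, h⟩
      exact (p1.trans p2).trans p3
  intro x hx y hy
  rw [hU] at hx hy
  simp only [Set.mem_iUnion] at hx hy
  obtain ⟨w, hw, hxw⟩ := hx
  obtain ⟨w', hw', hyw⟩ := hy
  exact key w hw w' (hS w hw w' hw') hw' x hxw y hyw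

end CoverAux2

namespace CoverAux
lemma int_aux1 {A c Δ : ℤ} (hc : 1 ≤ c) (hΔ : 1 ≤ Δ) : A * Δ ≤ (A + c) * Δ - 1 := by nlinarith
lemma int_aux2 {A B c Δ : ℤ} (hAB : A ≤ B + 1) (hc : 2 ≤ c) (hΔ : 1 ≤ Δ) :
    A * Δ ≤ (B + c) * Δ - 1 := by nlinarith
lemma int_aux3 {A q Δ : ℤ} (hq : 1 ≤ q) (hΔ : 1 ≤ Δ) : (A - 1) * q * Δ ≤ A * q * Δ - 1 := by
  nlinarith

lemma dist1_comm {d : ℕ} (x y : Pt d) : dist1 x y = dist1 y x := by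
  unfold dist1
  congr 1
  · apply Finset.sum_congr rfl
    intro s _
    omega
  · omega

end CoverAux

namespace CoverAux
lemma int_boxlow {a aℓ ℓ Δ D : ℤ} (h : aℓ * ℓ ≤ a) (hℓ : 1 ≤ ℓ) (hΔ : 1 ≤ Δ) (hD : 1 ≤ D) :
    (aℓ - 4 * D) * (ℓ * Δ) ≤ (a - (4 * D - 1)) * Δ := by
  nlinarith [mul_le_mul_of_nonneg_right h (by linarith : (0:ℤ) ≤ Δ),
    mul_nonneg (mul_nonneg (by linarith : (0:ℤ) ≤ 4 * D) (by linarith : (0:ℤ) ≤ Δ))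
      (by linarith : (0:ℤ) ≤ ℓ - 1)]

lemma int_boxhigh {a aℓ ℓ Δ D : ℤ} (h : a < (aℓ + 1) * ℓ) (hℓ : 1 ≤ ℓ) (hΔ : 1 ≤ Δ)
    (hD : 1 ≤ D) : (a + 4 * D) * Δ - 1 ≤ (aℓ + (4 * D + 1)) * (ℓ * Δ) := by
  nlinarith [mul_le_mul_of_nonneg_right (by linarith : a ≤ (aℓ + 1) * ℓ - 1)
      (by linarith : (0:ℤ) ≤ Δ),
    mul_nonneg (mul_nonneg (by linarith : (0:ℤ) ≤ 4 * D) (by linarith : (0:ℤ) ≤ Δ))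
      (by linarith : (0:ℤ) ≤ ℓ - 1)]

lemma int_tboxlow {b bℓ ℓ Δ q : ℤ} (h : bℓ * ℓ ≤ b) (hℓ : 1 ≤ ℓ) (hΔ : 1 ≤ Δ) (hq : 1 ≤ q) :
    (bℓ - 1) * q * (ℓ * Δ) ≤ (b - 1) * q * Δ := by
  nlinarith [mul_le_mul_of_nonneg_right h
      (by positivity : (0:ℤ) ≤ q * Δ),
    mul_nonneg (mul_nonneg (by linarith : (0:ℤ) ≤ q) (by linarith : (0:ℤ) ≤ Δ))
      (by linarith : (0:ℤ) ≤ ℓ - 1)]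

lemma int_tboxhigh {b bℓ ℓ Δ q : ℤ} (h : b < (bℓ + 1) * ℓ) (hℓ : 1 ≤ ℓ) (hΔ : 1 ≤ Δ)
    (hq : 1 ≤ q) : b * q * Δ - 1 ≤ (bℓ + 1) * q * (ℓ * Δ) := by
  nlinarith [mul_le_mul_of_nonneg_right (le_of_lt h) (by positivity : (0:ℤ) ≤ q * Δ)]
end CoverAux

section MainThm
open CoverAux CoverAux2

/-- Lemma 11: there is a constant `K = K(d)` such that for every even
`C₀ ≥ 2`, all `r ≥ p ≥ 2`, every `ν ≥ 1` and every finite nonempty `ℤ^{d+1}`-connected set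
`S`, there is a `ℤ^{d+1}`-connected set `Λ` with
`|Λ| ≤ K (|S| Δ_p / (ν Δ_r) + 1) p^q` whose cubes `ℒ_{r,ν}` cover `S*_p`. -/
theorem cover_SStar_by_LBlocks (d : ℕ) (hd : 1 ≤ d) :
    ∃ K : ℝ, 0 < K ∧
      ∀ C0 : ℕ, Even C0 → 2 ≤ C0 →
      ∀ p r : ℕ, 2 ≤ p → p ≤ r →
      ∀ ν : ℕ, 1 ≤ ν →
      ∀ S : Set ((Fin d → ℤ) × ℤ), S.Finite → S.Nonempty → ConnectedIn NNAdjP S →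
      ∃ Λ : Set ((Fin d → ℤ) × ℤ), Λ.Finite ∧ ConnectedIn NNAdjP Λ ∧
        (Λ.ncard : ℝ) ≤
          K * ((S.ncard : ℝ) * (C0 : ℝ) ^ (6 * p) / ((ν : ℝ) * (C0 : ℝ) ^ (6 * r)) + 1) *
            (p : ℝ) ^ (2 * d + 1) ∧
        SStar d C0 p S ⊆ ⋃ mu ∈ Λ, LBlock d C0 r ν mu.1 mu.2 := by
  classical
  refine ⟨3 ^ (d + 2) * (8 * d + 2) ^ d, by positivity, ?_⟩
  intro C0 _hE hC0 p r hp hpr ν hν S hSfin hSne hSconn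
  -- basic quantities (introduced as opaque constants)
  obtain ⟨ΔZ, hΔZ⟩ : ∃ D : ℤ, (C0 : ℤ) ^ (6 * p) = D := ⟨_, rfl⟩
  obtain ⟨qN, hqNdef⟩ : ∃ n : ℕ, p ^ (2 * d + 1) = n := ⟨_, rfl⟩
  obtain ⟨qZ, hqZ⟩ : ∃ q : ℤ, (qN : ℤ) = q := ⟨_, rfl⟩
  obtain ⟨ℓN, hℓNdef⟩ : ∃ n : ℕ, ν * C0 ^ (6 * (r - p)) = n := ⟨_, rfl⟩
  obtain ⟨ℓZ, hℓZ⟩ : ∃ l : ℤ, (ℓN : ℤ) = l := ⟨_, rfl⟩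
  obtain ⟨LZ, hLZ⟩ : ∃ L : ℤ, (ν : ℤ) * (C0 : ℤ) ^ (6 * r) = L := ⟨_, rfl⟩
  have hC0Z : (2 : ℤ) ≤ (C0 : ℤ) := by exact_mod_cast hC0
  have hΔ1 : 1 ≤ ΔZ := by rw [← hΔZ]; exact one_le_pow₀ (by omega)
  have hq1 : 1 ≤ qN := by rw [← hqNdef]; exact Nat.one_le_pow _ _ (by omega)
  have hqZ1 : 1 ≤ qZ := by rw [← hqZ]; exact_mod_cast hq1
  have hℓN1 : 1 ≤ ℓN := by
    rw [← hℓNdef]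
    have : 0 < ν * C0 ^ (6 * (r - p)) := by positivity
    omega
  have hℓ1 : 1 ≤ ℓZ := by rw [← hℓZ]; exact_mod_cast hℓN1
  have hLfact : LZ = ℓZ * ΔZ := by
    rw [← hLZ, ← hℓZ, ← hℓNdef, ← hΔZ]
    push_cast
    rw [show 6 * r = 6 * (r - p) + 6 * p by omega, pow_add]
    ring
  have hL0 : 0 < LZ := by rw [hLfact]; nlinarith
  have hdZ : (1 : ℤ) ≤ (d : ℤ) := by exact_mod_cast hd
  -- finite model of S
  set S' : Finset (Pt d) := hSfin.toFinset with hS'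
  have hmemS' : ∀ w : Pt d, w ∈ S' ↔ w ∈ S := fun w => hSfin.mem_toFinset
  set N : ℕ := S'.card with hN
  -- coarse maps
  set F : Pt d → Pt d := fun z => (fun s => z.1 s / LZ, z.2 / LZ) with hF
  set ψ : Pt d → Pt d := fun w => (fun s => w.1 s / ℓZ, w.2 / ℓZ) with hψ
  -- coarse boxes attached to points of S
  set G : Pt d → Finset (Pt d) := fun w =>
    (Fintype.piFinset fun s =>
      Finset.Icc ((w.1 s - (4 * (d : ℤ) - 1)) * ΔZ / LZ) (((w.1 s + 4 * (d : ℤ)) * ΔZ - 1) / LZ))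
    ×ˢ Finset.Icc ((w.2 - 1) * qZ * ΔZ / LZ) ((w.2 * qZ * ΔZ - 1) / LZ) with hG
  have hGmem : ∀ w : Pt d, ∀ (g : Fin d → ℤ) (t : ℤ),
      (∀ s, (w.1 s - (4 * (d : ℤ) - 1)) * ΔZ ≤ g s ∧ g s ≤ (w.1 s + 4 * (d : ℤ)) * ΔZ - 1) →
      ((w.2 - 1) * qZ * ΔZ ≤ t ∧ t ≤ w.2 * qZ * ΔZ - 1) → F (g, t) ∈ G w := by
    intro w g t hsp htm
    set z : Pt d := (g, t) with hz
    rw [hG]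
    rw [Finset.mem_product]
    constructor
    · rw [Fintype.mem_piFinset]
      intro s
      rw [Finset.mem_Icc]
      exact ⟨Int.ediv_le_ediv hL0 (hsp s).1, Int.ediv_le_ediv hL0 (hsp s).2⟩
    · rw [Finset.mem_Icc]
      exact ⟨Int.ediv_le_ediv hL0 htm.1, Int.ediv_le_ediv hL0 htm.2⟩
  set Λ : Finset (Pt d) := S'.biUnion G with hΛ
  refine ⟨(↑Λ : Set (Pt d)), Λ.finite_toSet, ?_, ?_, ?_⟩
  · -- connectivity
    have hGset : ∀ w : Pt d, (↑(G w) : Set (Pt d)) =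
        {z : Pt d | (∀ s, (w.1 s - (4 * (d : ℤ) - 1)) * ΔZ / LZ ≤ z.1 s ∧
            z.1 s ≤ ((w.1 s + 4 * (d : ℤ)) * ΔZ - 1) / LZ) ∧
          (w.2 - 1) * qZ * ΔZ / LZ ≤ z.2 ∧ z.2 ≤ (w.2 * qZ * ΔZ - 1) / LZ} := by
      intro w
      ext z
      simp only [hG, Finset.mem_coe, Finset.mem_product, Fintype.mem_piFinset,
        Finset.mem_Icc, Set.mem_setOf_eq]
    have hcoe : (↑Λ : Set (Pt d)) = ⋃ w ∈ S, (↑(G w) : Set (Pt d)) := by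
      rw [hΛ, Finset.coe_biUnion]
      congr 1
      ext w
      simp [hmemS']
    have hzero : (0 : ℤ) ≤ ΔZ := by omega
    have hsp_corner : ∀ (w : Pt d) (s : Fin d),
        (w.1 s - (4 * (d : ℤ) - 1)) * ΔZ ≤ w.1 s * ΔZ ∧
        w.1 s * ΔZ ≤ (w.1 s + 4 * (d : ℤ)) * ΔZ - 1 := by
      intro w s
      constructor
      · exact mul_le_mul_of_nonneg_right (by omega) hzero
      · exact int_aux1 (by omega) hΔ1
    have htm_corner : ∀ w : Pt d,
        (w.2 - 1) * qZ * ΔZ ≤ (w.2 - 1) * qZ * ΔZ ∧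
        (w.2 - 1) * qZ * ΔZ ≤ w.2 * qZ * ΔZ - 1 :=
      fun w => ⟨le_refl _, int_aux3 hqZ1 hΔ1⟩
    rw [hcoe]
    apply connectedIn_biUnion hSconn
    · intro w _
      rw [hGset w]
      exact boxConn _ _ _ _
    · intro w _
      exact ⟨F (fun s => w.1 s * ΔZ, (w.2 - 1) * qZ * ΔZ),
        Finset.mem_coe.mpr (hGmem w _ _ (hsp_corner w) (htm_corner w))⟩
    · intro w hw w' hw' hadj
      rcases adj_cases hadj with ⟨heq1, ht⟩ | ⟨s₀, hs₀, hoth, ht⟩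
      · -- temporal step
        have main : ∀ a b : Pt d, a.1 = b.1 → b.2 = a.2 + 1 →
            ∃ x ∈ (↑(G a) : Set (Pt d)), ∃ y ∈ (↑(G b) : Set (Pt d)), x = y ∨ NNAdjP x y := by
          intro a b hab1 hab2
          have hx : F (fun s => a.1 s * ΔZ, a.2 * qZ * ΔZ - 1) ∈ G a := by
            apply hGmem a _ _ (hsp_corner a)
            refine ⟨int_aux3 hqZ1 hΔ1, le_refl _⟩
          have hy : F (fun s => a.1 s * ΔZ, a.2 * qZ * ΔZ) ∈ G b := by
            apply hGmem b _ _
            · intro s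
              rw [← hab1]
              exact hsp_corner a s
            · rw [hab2]
              constructor
              · have e : (a.2 + 1 - 1) * qZ * ΔZ = a.2 * qZ * ΔZ := by ring
                rw [e]
              · have h3 := int_aux3 (A := a.2 + 1) hqZ1 hΔ1
                have e : (a.2 + 1 - 1) * qZ * ΔZ = a.2 * qZ * ΔZ := by ring
                rw [e] at h3
                exact h3
          refine ⟨_, Finset.mem_coe.mpr hx, _, Finset.mem_coe.mpr hy, ?_⟩
          have hle : (a.2 * qZ * ΔZ - 1) / LZ ≤ (a.2 * qZ * ΔZ) / LZ :=
            Int.ediv_le_ediv hL0 (by omega)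
          have hle2 : (a.2 * qZ * ΔZ) / LZ ≤ (a.2 * qZ * ΔZ - 1) / LZ + 1 := by
            have e : (a.2 * qZ * ΔZ - 1 + 1 * LZ) / LZ = (a.2 * qZ * ΔZ - 1) / LZ + 1 :=
              Int.add_mul_ediv_right _ 1 hL0.ne'
            rw [← e]
            exact Int.ediv_le_ediv hL0 (by omega)
          rcases eq_or_lt_of_le hle with heq | hlt
          · left
            rw [hF]
            exact Prod.ext rfl heq
          · right
            show (∑ s, |_ - _|) + |_ - _| = 1
            have hzsum : ∑ s, |(F (fun s => a.1 s * ΔZ, a.2 * qZ * ΔZ - 1)).1 s -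
                (F (fun s => a.1 s * ΔZ, a.2 * qZ * ΔZ)).1 s| = 0 :=
              Finset.sum_eq_zero fun s _ => by simp [hF]
            rw [hzsum]
            have e2 : (F (fun s => a.1 s * ΔZ, a.2 * qZ * ΔZ - 1)).2 = (a.2 * qZ * ΔZ - 1) / LZ := by
              rw [hF]
            have e3 : (F (fun s => a.1 s * ΔZ, a.2 * qZ * ΔZ)).2 = (a.2 * qZ * ΔZ) / LZ := by
              rw [hF]
            rw [e2, e3]
            have : (a.2 * qZ * ΔZ) / LZ = (a.2 * qZ * ΔZ - 1) / LZ + 1 := by omega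
            rw [this]
            simp
        rcases (by omega : w'.2 = w.2 + 1 ∨ w.2 = w'.2 + 1) with hcase | hcase
        · exact main w w' heq1 hcase
        · obtain ⟨x, hx, y, hy, hor⟩ := main w' w heq1.symm hcase
          refine ⟨y, hy, x, hx, ?_⟩
          rcases hor with h | h
          · exact Or.inl h.symm
          · right
            rw [nnadj_iff] at h ⊢
            rwa [dist1_comm]
      · -- spatial step
        have hc : ∀ s, w.1 s ≤ max (w.1 s) (w'.1 s) ∧ max (w.1 s) (w'.1 s) ≤ w.1 s + 1 ∧
            w'.1 s ≤ max (w.1 s) (w'.1 s) ∧ max (w.1 s) (w'.1 s) ≤ w'.1 s + 1 := by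
          intro s
          by_cases hs : s = s₀
          · subst hs
            refine ⟨le_max_left _ _, max_le (by omega) (by omega),
              le_max_right _ _, max_le (by omega) (by omega)⟩
          · have he := hoth s hs
            refine ⟨le_max_left _ _, max_le (by omega) (by omega),
              le_max_right _ _, max_le (by omega) (by omega)⟩
        have hzero : (0 : ℤ) ≤ ΔZ := by omega
        have hxw : F (fun s => max (w.1 s) (w'.1 s) * ΔZ, (w.2 - 1) * qZ * ΔZ) ∈ G w := by
          apply hGmem w _ _
          · intro s
            obtain ⟨c1, c2, c3, c4⟩ := hc s
            constructor
            · exact mul_le_mul_of_nonneg_right (by omega) hzero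
            · exact int_aux2 c2 (by omega) hΔ1
          · exact ⟨le_refl _, int_aux3 hqZ1 hΔ1⟩
        have hxw' : F (fun s => max (w.1 s) (w'.1 s) * ΔZ, (w.2 - 1) * qZ * ΔZ) ∈ G w' := by
          apply hGmem w' _ _
          · intro s
            obtain ⟨c1, c2, c3, c4⟩ := hc s
            constructor
            · exact mul_le_mul_of_nonneg_right (by omega) hzero
            · exact int_aux2 c4 (by omega) hΔ1
          · rw [← ht]
            exact ⟨le_refl _, int_aux3 hqZ1 hΔ1⟩
        exact ⟨_, Finset.mem_coe.mpr hxw, _, Finset.mem_coe.mpr hxw', Or.inl rfl⟩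
  · -- cardinality
    have hℓ0 : (0 : ℤ) < ℓZ := by omega
    -- the enlarged coarse box attached to a coarse cell
    have hGB : ∀ w : Pt d, ∀ mu ∈ G w, mu ∈
        (Fintype.piFinset fun s =>
          Finset.Icc ((ψ w).1 s - 4 * (d : ℤ)) ((ψ w).1 s + (4 * (d : ℤ) + 1)))
        ×ˢ Finset.Icc (((ψ w).2 - 1) * qZ) (((ψ w).2 + 1) * qZ) := by
      intro w mu hmu
      rw [hG, Finset.mem_product, Fintype.mem_piFinset] at hmu
      rw [Finset.mem_product, Fintype.mem_piFinset]
      have hψ1 : ∀ s, (ψ w).1 s = w.1 s / ℓZ := fun s => rfl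
      have hψ2 : (ψ w).2 = w.2 / ℓZ := rfl
      constructor
      · intro s
        have hs := hmu.1 s
        rw [Finset.mem_Icc] at hs ⊢
        rw [hψ1]
        have hlow := ediv_lower hℓ0 (w.1 s)
        have hup := ediv_upper hℓ0 (w.1 s)
        constructor
        · refine le_trans (le_ediv_of_le hL0 ?_) hs.1
          rw [hLfact]
          exact int_boxlow hlow hℓ1 hΔ1 hdZ
        · refine le_trans hs.2 (ediv_le_of_le hL0 ?_)
          rw [hLfact]
          exact int_boxhigh hup hℓ1 hΔ1 hdZ
      · have hs := hmu.2
        rw [Finset.mem_Icc] at hs ⊢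
        rw [hψ2]
        have hlow := ediv_lower hℓ0 w.2
        have hup := ediv_upper hℓ0 w.2
        constructor
        · refine le_trans (le_ediv_of_le hL0 ?_) hs.1
          rw [hLfact]
          exact int_tboxlow hlow hℓ1 hΔ1 hqZ1
        · refine le_trans hs.2 (ediv_le_of_le hL0 ?_)
          rw [hLfact]
          exact int_tboxhigh hup hℓ1 hΔ1 hqZ1
    set Box : Pt d → Finset (Pt d) := fun c =>
      (Fintype.piFinset fun s =>
        Finset.Icc (c.1 s - 4 * (d : ℤ)) (c.1 s + (4 * (d : ℤ) + 1)))
      ×ˢ Finset.Icc ((c.2 - 1) * qZ) ((c.2 + 1) * qZ) with hBox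
    set V : Finset (Pt d) := S'.image ψ with hV
    have hsubBox : Λ ⊆ V.biUnion Box := by
      intro mu hmu
      rw [hΛ, Finset.mem_biUnion] at hmu
      obtain ⟨w, hwS, hmuG⟩ := hmu
      rw [Finset.mem_biUnion]
      exact ⟨ψ w, Finset.mem_image_of_mem ψ hwS, hGB w mu hmuG⟩
    have hBoxCard : ∀ c : Pt d, (Box c).card = (8 * d + 2) ^ d * (2 * qN + 1) := by
      intro c
      rw [hBox]
      rw [Finset.card_product, Fintype.card_piFinset]
      congr 1
      · have he : ∀ s : Fin d,
            (Finset.Icc (c.1 s - 4 * (d : ℤ)) (c.1 s + (4 * (d : ℤ) + 1))).card = 8 * d + 2 := by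
          intro s
          rw [Int.card_Icc]
          omega
        rw [Finset.prod_congr rfl (fun s _ => he s), Finset.prod_const, Finset.card_univ,
          Fintype.card_fin]
      · rw [Int.card_Icc]
        have e : (c.2 + 1) * qZ + 1 - (c.2 - 1) * qZ = 2 * qZ + 1 := by ring
        rw [e, ← hqZ]
        omega
    have hcount : Λ.card ≤ V.card * ((8 * d + 2) ^ d * (2 * qN + 1)) := by
      calc Λ.card ≤ (V.biUnion Box).card := Finset.card_le_card hsubBox
        _ ≤ ∑ c ∈ V, (Box c).card := Finset.card_biUnion_le
        _ = V.card * ((8 * d + 2) ^ d * (2 * qN + 1)) := by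
            rw [Finset.sum_congr rfl (fun c _ => hBoxCard c), Finset.sum_const, smul_eq_mul]
    -- the key coarse-graining count
    have hVN : V.card * ℓN ≤ 3 ^ (d + 1) * (N + ℓN) := by
      by_cases hA : ∀ w ∈ S', ∃ y ∈ S', ℓN ≤ distI w y
      · -- every point sees a far point: volume growth
        classical
        set mod3 : Pt d → (Fin d → ZMod 3) × ZMod 3 :=
          fun v => (fun s => (v.1 s : ZMod 3), (v.2 : ZMod 3)) with hmod3
        have hcard3 : (Finset.univ : Finset ((Fin d → ZMod 3) × ZMod 3)).card = 3 ^ (d + 1) := by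
          rw [Finset.card_univ, Fintype.card_prod, Fintype.card_fun, ZMod.card 3,
            Fintype.card_fin, pow_succ]
        have hfib : V.card = ∑ y : (Fin d → ZMod 3) × ZMod 3,
            (V.filter (fun v => mod3 v = y)).card :=
          Finset.card_eq_sum_card_fiberwise (fun x _ => Finset.mem_univ _)
        have hex : ∃ y ∈ (Finset.univ : Finset ((Fin d → ZMod 3) × ZMod 3)),
            V.card ≤ 3 ^ (d + 1) * (V.filter (fun v => mod3 v = y)).card := by
          apply Finset.exists_le_of_sum_le Finset.univ_nonempty
          rw [Finset.sum_const, ← Finset.mul_sum, ← hfib, hcard3, smul_eq_mul]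
        obtain ⟨y₀, -, hy₀⟩ := hex
        set V₀ : Finset (Pt d) := V.filter (fun v => mod3 v = y₀) with hV₀
        set rep : Pt d → Pt d := fun v =>
          if h : ∃ w, w ∈ S' ∧ ψ w = v then h.choose else v with hrepdef
        have hrep : ∀ v ∈ V, rep v ∈ S' ∧ ψ (rep v) = v := by
          intro v hv
          rw [hV, Finset.mem_image] at hv
          obtain ⟨w, hw, hwv⟩ := hv
          have hex2 : ∃ w, w ∈ S' ∧ ψ w = v := ⟨w, hw, hwv⟩
          rw [hrepdef]
          simp only [dif_pos hex2]
          exact hex2.choose_spec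
        set ball : Pt d → Finset (Pt d) :=
          fun v => S'.filter (fun z => distI (rep v) z ≤ ℓN) with hball
        have hsep : ∀ v ∈ V₀, ∀ v' ∈ V₀, v ≠ v' → Disjoint (ball v) (ball v') := by
          intro v hv v' hv' hne
          have hvV : v ∈ V := Finset.mem_of_mem_filter v hv
          have hv'V : v' ∈ V := Finset.mem_of_mem_filter v' hv'
          have hm : mod3 v = mod3 v' := by
            have h1 := (Finset.mem_filter.mp hv).2
            have h2 := (Finset.mem_filter.mp hv').2
            rw [h1, h2]
          have hrv := hrep v hvV
          have hrv' := hrep v' hv'V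
          -- a coordinate where v and v' differ by at least 3
          have hfar : 2 * ℓN + 1 ≤ distI (rep v) (rep v') := by
            have hdiff : (∃ s, v.1 s ≠ v'.1 s) ∨ v.2 ≠ v'.2 := by
              by_contra hcon
              push_neg at hcon
              exact hne (Prod.ext (funext hcon.1) hcon.2)
            have hkey : ∀ A B a a' : ℤ, A ≠ B → (A : ZMod 3) = (B : ZMod 3) →
                a / ℓZ = A → a' / ℓZ = B → 2 * ℓN + 1 ≤ (a - a').natAbs := by
              intro A B a a' hAB hABm ha ha'
              have hdvd : (3 : ℤ) ∣ A - B := by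
                have h := (ZMod.intCast_eq_intCast_iff A B 3).mp hABm
                exact dvd_sub_comm.mp (Int.ModEq.dvd h)
              have habs : 3 ≤ |A - B| :=
                Int.le_of_dvd (abs_pos.mpr (sub_ne_zero.mpr hAB)) ((dvd_abs _ _).mpr hdvd)
              have hsep2 : 2 * ℓZ + 1 ≤ |a - a'| := by
                apply ediv_sep hℓ0
                rw [ha, ha']
                exact habs
              rw [Int.abs_eq_natAbs, ← hℓZ] at hsep2
              exact_mod_cast hsep2
            rcases hdiff with ⟨s, hs⟩ | hs
            · have hm1 : ((v.1 s : ℤ) : ZMod 3) = ((v'.1 s : ℤ) : ZMod 3) := by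
                have := congrArg Prod.fst hm
                exact congrFun this s
              have h1 : (rep v).1 s / ℓZ = v.1 s := by
                have := congrArg Prod.fst hrv.2
                exact congrFun this s
              have h2 : (rep v').1 s / ℓZ = v'.1 s := by
                have := congrArg Prod.fst hrv'.2
                exact congrFun this s
              exact le_trans (hkey _ _ _ _ hs hm1 h1 h2) (distI_coord_s _ _ s)
            · have hm1 : ((v.2 : ℤ) : ZMod 3) = ((v'.2 : ℤ) : ZMod 3) := congrArg Prod.snd hm
              have h1 : (rep v).2 / ℓZ = v.2 := congrArg Prod.snd hrv.2
              have h2 : (rep v').2 / ℓZ = v'.2 := congrArg Prod.snd hrv'.2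
              exact le_trans (hkey _ _ _ _ hs hm1 h1 h2) (distI_coord_t _ _)
          rw [Finset.disjoint_left]
          intro z hz hz'
          rw [hball, Finset.mem_filter] at hz hz'
          have htr : distI (rep v) (rep v') ≤ 2 * ℓN := by
            calc distI (rep v) (rep v') ≤ distI (rep v) z + distI z (rep v') :=
                distI_triangle _ _ _
              _ ≤ ℓN + ℓN := by
                  have := hz.2
                  have h2 : distI z (rep v') ≤ ℓN := by rw [distI_comm]; exact hz'.2
                  omega
              _ = 2 * ℓN := by ring
          omega
        have hballcard : ∀ v ∈ V₀, ℓN ≤ (ball v).card := by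
          intro v hv
          have hvV : v ∈ V := Finset.mem_of_mem_filter v hv
          have hrv := hrep v hvV
          have hrvS : rep v ∈ S := (hmemS' _).mp hrv.1
          obtain ⟨y, hyS, hyd⟩ := hA (rep v) hrv.1
          have hyS2 : y ∈ S := (hmemS' _).mp hyS
          have hg : ∀ t : ℕ, ∃ z : Pt d, t ≤ ℓN → (z ∈ S ∧ distI (rep v) z = t) := by
            intro t
            by_cases ht : t ≤ ℓN
            · obtain ⟨z, hz1, hz2⟩ := growth hSconn hrvS hyS2 t (le_trans ht hyd)
              exact ⟨z, fun _ => ⟨hz1, hz2⟩⟩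
            · exact ⟨rep v, fun h => absurd h ht⟩
          choose g hgspec using hg
          have : (Finset.range ℓN).card ≤ (ball v).card := by
            apply Finset.card_le_card_of_injOn g
            · intro t htr
              rw [Finset.mem_coe, Finset.mem_range] at htr
              have hts : t ≤ ℓN := le_of_lt htr
              obtain ⟨hz1, hz2⟩ := hgspec t hts
              rw [Finset.mem_coe, hball, Finset.mem_filter]
              exact ⟨(hmemS' _).mpr hz1, by omega⟩
            · intro t ht t' ht' heq
              rw [Finset.mem_coe, Finset.mem_range] at ht ht'
              have e1 := (hgspec t (le_of_lt ht)).2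
              have e2 := (hgspec t' (le_of_lt ht')).2
              rw [heq] at e1
              omega
          rwa [Finset.card_range] at this
        have hsum : V₀.card * ℓN ≤ N := by
          have h1 : (V₀.biUnion ball).card = ∑ v ∈ V₀, (ball v).card :=
            Finset.card_biUnion hsep
          have h2 : V₀.card • ℓN ≤ ∑ v ∈ V₀, (ball v).card :=
            Finset.card_nsmul_le_sum V₀ _ ℓN hballcard
          have h3 : V₀.biUnion ball ⊆ S' :=
            Finset.biUnion_subset.mpr fun v _ => Finset.filter_subset _ _
          have h4 := Finset.card_le_card h3
          rw [smul_eq_mul] at h2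
          rw [hN]
          omega
        calc V.card * ℓN ≤ (3 ^ (d + 1) * V₀.card) * ℓN := Nat.mul_le_mul_right _ hy₀
          _ = 3 ^ (d + 1) * (V₀.card * ℓN) := by ring
          _ ≤ 3 ^ (d + 1) * N := Nat.mul_le_mul_left _ hsum
          _ ≤ 3 ^ (d + 1) * (N + ℓN) := Nat.mul_le_mul_left _ (Nat.le_add_right _ _)
      · -- all of S is within a small ball: few cells
        push_neg at hA
        obtain ⟨w, hwS, hw⟩ := hA
        have hVsub : V ⊆
            (Fintype.piFinset fun s => Finset.Icc (w.1 s / ℓZ - 1) (w.1 s / ℓZ + 1))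
            ×ˢ Finset.Icc (w.2 / ℓZ - 1) (w.2 / ℓZ + 1) := by
          intro v hv
          rw [hV, Finset.mem_image] at hv
          obtain ⟨y, hyS, hyv⟩ := hv
          have hd2 := hw y hyS
          rw [Finset.mem_product, Fintype.mem_piFinset]
          have hco : ∀ a b : ℤ, (a - b).natAbs ≤ ℓN → |b / ℓZ - a / ℓZ| ≤ 1 := by
            intro a b hab
            apply ediv_nbhd hℓ0
            have h1 : (b - a).natAbs ≤ ℓN := by omega
            calc |b - a| = ((b - a).natAbs : ℤ) := Int.abs_eq_natAbs _
              _ ≤ ((ℓN : ℕ) : ℤ) := by exact_mod_cast h1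
              _ = ℓZ := hℓZ
          constructor
          · intro s
            rw [Finset.mem_Icc]
            have h1 : (w.1 s - y.1 s).natAbs ≤ ℓN :=
              le_trans (distI_coord_s w y s) (by omega)
            have h2 := hco (w.1 s) (y.1 s) h1
            have h3 : v.1 s = y.1 s / ℓZ := by rw [← hyv]
            rw [h3]
            rw [abs_le] at h2
            omega
          · rw [Finset.mem_Icc]
            have h1 : (w.2 - y.2).natAbs ≤ ℓN :=
              le_trans (distI_coord_t w y) (by omega)
            have h2 := hco w.2 y.2 h1
            have h3 : v.2 = y.2 / ℓZ := by rw [← hyv]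
            rw [h3]
            rw [abs_le] at h2
            omega
        have hVcard : V.card ≤ 3 ^ (d + 1) := by
          refine le_trans (Finset.card_le_card hVsub) ?_
          rw [Finset.card_product, Fintype.card_piFinset]
          have he : ∀ s : Fin d, (Finset.Icc (w.1 s / ℓZ - 1) (w.1 s / ℓZ + 1)).card = 3 := by
            intro s
            rw [Int.card_Icc]
            omega
          rw [Finset.prod_congr rfl (fun s _ => he s), Finset.prod_const, Finset.card_univ,
            Fintype.card_fin, Int.card_Icc]
          have : ((w.2 / ℓZ + 1) + 1 - (w.2 / ℓZ - 1)).toNat = 3 := by omega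
          rw [this, pow_succ]
        calc V.card * ℓN ≤ 3 ^ (d + 1) * ℓN := Nat.mul_le_mul_right _ hVcard
          _ ≤ 3 ^ (d + 1) * (N + ℓN) := Nat.mul_le_mul_left _ (Nat.le_add_left _ _)
    -- put everything together over the reals
    have hNcard : S.ncard = N := by
      rw [hN, hS', Set.ncard_eq_toFinset_card S hSfin]
    have hΛcard : (↑Λ : Set (Pt d)).ncard = Λ.card := Set.ncard_coe_finset Λ
    have hmaster : Λ.card * ℓN ≤ (3 ^ (d + 1) * (N + ℓN)) * ((8 * d + 2) ^ d * (2 * qN + 1)) := by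
      calc Λ.card * ℓN ≤ (V.card * ((8 * d + 2) ^ d * (2 * qN + 1))) * ℓN :=
          Nat.mul_le_mul_right _ hcount
        _ = (V.card * ℓN) * ((8 * d + 2) ^ d * (2 * qN + 1)) := by ring
        _ ≤ (3 ^ (d + 1) * (N + ℓN)) * ((8 * d + 2) ^ d * (2 * qN + 1)) :=
          Nat.mul_le_mul_right _ hVN
    have hl0R : (0 : ℝ) < (ℓN : ℝ) := by exact_mod_cast hℓN1
    have hq1R : (1 : ℝ) ≤ (qN : ℝ) := by exact_mod_cast hq1
    have hmasterR : (Λ.card : ℝ) * (ℓN : ℝ) ≤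
        (3 ^ (d + 1) * ((N : ℝ) + (ℓN : ℝ))) * ((8 * (d : ℝ) + 2) ^ d * (2 * (qN : ℝ) + 1)) := by
      have := hmaster
      have hcast : ((Λ.card * ℓN : ℕ) : ℝ) ≤
          (((3 ^ (d + 1) * (N + ℓN)) * ((8 * d + 2) ^ d * (2 * qN + 1)) : ℕ) : ℝ) := by
        exact_mod_cast this
      push_cast at hcast
      convert hcast using 2 <;> push_cast <;> ring
    have hfinal : (Λ.card : ℝ) ≤
        (3 ^ (d + 2) * (8 * (d : ℝ) + 2) ^ d) * ((N : ℝ) / (ℓN : ℝ) + 1) * (qN : ℝ) := by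
      apply le_of_mul_le_mul_right _ hl0R
      calc (Λ.card : ℝ) * (ℓN : ℝ)
          ≤ (3 ^ (d + 1) * ((N : ℝ) + (ℓN : ℝ))) * ((8 * (d : ℝ) + 2) ^ d * (2 * (qN : ℝ) + 1)) :=
            hmasterR
        _ ≤ (3 ^ (d + 1) * ((N : ℝ) + (ℓN : ℝ))) * ((8 * (d : ℝ) + 2) ^ d * (3 * (qN : ℝ))) := by
            gcongr
            linarith
        _ = (3 ^ (d + 2) * (8 * (d : ℝ) + 2) ^ d) * ((N : ℝ) / (ℓN : ℝ) + 1) * (qN : ℝ) * (ℓN : ℝ) := by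
            field_simp
            ring
    have hq' : (p : ℝ) ^ (2 * d + 1) = (qN : ℝ) := by rw [← hqNdef]; push_cast; ring
    have hl' : (ν : ℝ) * (C0 : ℝ) ^ (6 * r) = (C0 : ℝ) ^ (6 * p) * (ℓN : ℝ) := by
      rw [← hℓNdef]
      push_cast
      rw [show 6 * r = 6 * (r - p) + 6 * p by omega, pow_add]
      ring
    have hC0pos : (0 : ℝ) < (C0 : ℝ) ^ (6 * p) := by positivity
    have hxl : (N : ℝ) * (C0 : ℝ) ^ (6 * p) / ((ν : ℝ) * (C0 : ℝ) ^ (6 * r))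
        = (N : ℝ) / (ℓN : ℝ) := by
      rw [hl', mul_comm ((N : ℝ))]
      exact mul_div_mul_left _ _ (ne_of_gt hC0pos)
    rw [hΛcard, hNcard, hxl, hq']
    calc (Λ.card : ℝ) ≤ (3 ^ (d + 2) * (8 * (d : ℝ) + 2) ^ d) * ((N : ℝ) / (ℓN : ℝ) + 1) * (qN : ℝ) :=
        hfinal
      _ = 3 ^ (d + 2) * (8 * (d : ℝ) + 2) ^ d * ((N : ℝ) / (ℓN : ℝ) + 1) * (qN : ℝ) := by ring

  · -- covering
    intro z hz
    obtain ⟨i', k, j, hjS, hnear, hzB⟩ := hz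
    set w : Pt d := (j, k + 1) with hw
    have hwS' : w ∈ S' := (hmemS' w).mpr hjS
    have hFz : F z ∈ G w := by
      apply hGmem
      · intro s
        have h1 := (hzB.1 s).1
        have h2 := (hzB.1 s).2
        rw [hΔZ] at h1 h2
        have h3 := abs_le.mp (hnear s)
        constructor
        · calc (w.1 s - (4 * (d : ℤ) - 1)) * ΔZ ≤ i' s * ΔZ := by
                apply mul_le_mul_of_nonneg_right _ (by omega)
                simp only [hw]
                omega
            _ ≤ z.1 s := h1
        · have : z.1 s ≤ (i' s + 1) * ΔZ - 1 := by omega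
          calc z.1 s ≤ (i' s + 1) * ΔZ - 1 := this
            _ ≤ (w.1 s + 4 * (d : ℤ)) * ΔZ - 1 := by
                have : (i' s + 1) * ΔZ ≤ (w.1 s + 4 * (d : ℤ)) * ΔZ := by
                  apply mul_le_mul_of_nonneg_right _ (by omega)
                  simp only [hw]
                  omega
                omega
      · have h1 := hzB.2.1
        have h2 := hzB.2.2
        have hqcast : (p : ℤ) ^ (2 * d + 1) = qZ := by
          rw [← hqZ, ← hqNdef]; push_cast; ring
        rw [hΔZ, hqcast] at h1 h2
        constructor
        · calc (w.2 - 1) * qZ * ΔZ = k * qZ * ΔZ := by simp only [hw]; ring_nf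
            _ ≤ z.2 := h1
        · have : z.2 ≤ (k + 1) * qZ * ΔZ - 1 := by omega
          calc z.2 ≤ (k + 1) * qZ * ΔZ - 1 := this
            _ = w.2 * qZ * ΔZ - 1 := by simp only [hw]
    have hzL : z ∈ LBlock d C0 r ν (F z).1 (F z).2 := by
      have key : ∀ x : ℤ, (ν : ℤ) * (x / LZ) * (C0 : ℤ) ^ (6 * r) ≤ x ∧
          x < (ν : ℤ) * (x / LZ + 1) * (C0 : ℤ) ^ (6 * r) := by
        intro x
        have e1 : (ν : ℤ) * (x / LZ) * (C0 : ℤ) ^ (6 * r) = (x / LZ) * LZ := by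
          rw [← hLZ]; ring
        have e2 : (ν : ℤ) * (x / LZ + 1) * (C0 : ℤ) ^ (6 * r) = (x / LZ + 1) * LZ := by
          rw [← hLZ]; ring
        rw [e1, e2]
        exact ⟨ediv_lower hL0 x, ediv_upper hL0 x⟩
      exact ⟨fun s => (key (z.1 s)), key z.2⟩
    refine Set.mem_biUnion ?_ hzL
    rw [Finset.mem_coe, hΛ, Finset.mem_biUnion]
    exact ⟨w, hwS', hFz⟩

end MainThm
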